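/- arXiv:2310.14789 — 2 statements merged into one kernel-verified Lean document; each statement's English description precedes it below -/
import Mathlib

section
/- Let $1 < p, q < \infty$ with $1/p + 1/q = 1$ and let $x, y \in M_n(\mathbb{C})$ with $\|x\|_p = 1$, $\|y\|_q \le 1$, and $\mathrm{tr}(xy) = 1$. Then $y$ is uniquely determined: writing the polar decomposition $x = u|x|$, one has $y = |x|^{p-1} u^*$. -/
open Matrix ComplexOrder

variable {n : ℕ}

/-- The absolute value `|x| = (xᴴx)^{1/2}` of a complex matrix. -/
noncomputable def matAbs (x : Matrix (Fin n) (Fin n) ℂ) : Matrix (Fin n) (Fin n) ℂ :=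
  ((Matrix.posSemidef_conjTranspose_mul_self x).1.eigenvectorUnitary : Matrix (Fin n) (Fin n) ℂ) *
    diagonal ((↑) ∘ Real.sqrt ∘ (Matrix.posSemidef_conjTranspose_mul_self x).1.eigenvalues) *
    (star (Matrix.posSemidef_conjTranspose_mul_self x).1.eigenvectorUnitary : Matrix (Fin n) (Fin n) ℂ)

theorem matAbs_isHermitian (x : Matrix (Fin n) (Fin n) ℂ) : (matAbs x).IsHermitian := by
  have h : matAbs x = (Matrix.posSemidef_conjTranspose_mul_self x).1.cfc Real.sqrt := by
    simp [matAbs, Matrix.IsHermitian.cfc, Unitary.conjStarAlgAut_apply]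
  rw [h, ← Matrix.IsHermitian.cfc_eq]
  exact cfc_predicate _ _

/-- The real power `|x|^r`, defined by functional calculus on `|x|`. -/
noncomputable def matAbsRpow (x : Matrix (Fin n) (Fin n) ℂ) (r : ℝ) :
    Matrix (Fin n) (Fin n) ℂ :=
  (matAbs_isHermitian x).cfc (fun t : ℝ => t ^ r)

/-- The Schatten `p`-norm `(tr |x|^p)^{1/p}` of a complex matrix. -/
noncomputable def schattenNorm (p : ℝ) (x : Matrix (Fin n) (Fin n) ℂ) : ℝ :=
  ((matAbsRpow x p).trace).re ^ (1 / p)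

lemma matAbs_eq' (x : Matrix (Fin n) (Fin n) ℂ) : matAbs x =
    ((Matrix.posSemidef_conjTranspose_mul_self x).1.eigenvectorUnitary : Matrix (Fin n) (Fin n) ℂ) *
    diagonal ((↑) ∘ Real.sqrt ∘ (Matrix.posSemidef_conjTranspose_mul_self x).1.eigenvalues) *
    ((Matrix.posSemidef_conjTranspose_mul_self x).1.eigenvectorUnitary : Matrix (Fin n) (Fin n) ℂ)ᴴ :=
  rfl

lemma matAbs_posSemidef (x : Matrix (Fin n) (Fin n) ℂ) : (matAbs x).PosSemidef := by
  rw [matAbs_eq']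
  refine PosSemidef.mul_mul_conjTranspose_same ?_ _
  rw [posSemidef_diagonal_iff]
  intro i
  simp only [Function.comp_apply, Complex.zero_le_real]
  exact Real.sqrt_nonneg _

lemma matAbs_mul_self (x : Matrix (Fin n) (Fin n) ℂ) : matAbs x * matAbs x = xᴴ * x := by
  have h := Matrix.posSemidef_conjTranspose_mul_self x
  have hs := h.1.spectral_theorem
  rw [Unitary.conjStarAlgAut_apply] at hs
  have hU : (star (h.1.eigenvectorUnitary : Matrix (Fin n) (Fin n) ℂ)) * h.1.eigenvectorUnitary = 1 :=
    Unitary.star_mul_self_of_mem h.1.eigenvectorUnitary.2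
  conv_rhs => rw [hs]
  unfold matAbs
  simp only [mul_assoc]
  rw [← mul_assoc (star _) _ (diagonal _ * _), hU, one_mul, ← mul_assoc (diagonal _),
    diagonal_mul_diagonal]
  congr 3
  funext i
  simp only [Function.comp_apply]
  rw [← Complex.ofReal_mul, Real.mul_self_sqrt (h.eigenvalues_nonneg i)]; rfl

-- scalar helpers

/-- Strict Young / equality case: if `a*b = a^p/p + b^q/q` with `a,b > 0` then `a^p = b^q`. -/
lemma young_eq_case {p q a b : ℝ} (hp : 1 < p) (hq : 1 < q) (hpq : 1/p + 1/q = 1)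
    (ha : 0 < a) (hb : 0 < b) (hab : a * b = a ^ p / p + b ^ q / q) : a ^ p = b ^ q := by
  by_contra hne
  have hXpos : 0 < a ^ p := Real.rpow_pos_of_pos ha p
  have hYpos : 0 < b ^ q := Real.rpow_pos_of_pos hb q
  have hp0 : (0:ℝ) < 1/p := by positivity
  have hq0 : (0:ℝ) < 1/q := by positivity
  have hlog := strictConcaveOn_log_Ioi.2 (Set.mem_Ioi.2 hXpos) (Set.mem_Ioi.2 hYpos) hne hp0 hq0 hpq
  simp only [smul_eq_mul] at hlog
  have h1 : (1/p) * Real.log (a ^ p) = Real.log a := by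
    rw [Real.log_rpow ha]; field_simp
  have h2 : (1/q) * Real.log (b ^ q) = Real.log b := by
    rw [Real.log_rpow hb]; field_simp
  rw [h1, h2, ← Real.log_mul (ne_of_gt ha) (ne_of_gt hb)] at hlog
  have heq : (1/p) * a ^ p + (1/q) * b ^ q = a * b := by rw [hab]; ring
  rw [heq] at hlog
  exact lt_irrefl _ hlog


private lemma amgm_eq_case {a b : ℝ} (h : a * b = (a^2+b^2)/2) : a = b := by
  by_contra hne
  rcases lt_or_gt_of_ne hne with h1 | h1 <;> nlinarith

private lemma im_zero_of_re_eq_abs {z : ℂ} (h : z.re = ‖z‖) : z.im = 0 := by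
  have h1 : ‖z‖ ^ 2 = z.re^2 + z.im^2 := by
    rw [Complex.sq_norm, Complex.normSq_apply]; ring
  rw [← h] at h1
  have h2 : z.im ^ 2 = 0 := by linarith
  exact pow_eq_zero_iff (by norm_num : (2:ℕ) ≠ 0) |>.1 h2


lemma key_ineq {p q : ℝ} (hp : 1 < p) (hq : 1 < q) (hpq : 1/p + 1/q = 1)
    {lam mu : ℝ} (hl : 0 ≤ lam) (hm : 0 ≤ mu) (c d : ℂ) :
    lam * (mu * (c*d).re) ≤
      (lam^p/p + mu^q/q) * ((‖c‖^2 + ‖d‖^2)/2) := by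
  have hlm : 0 ≤ lam * mu := mul_nonneg hl hm
  have hs0 : (0:ℝ) ≤ (‖c‖^2 + ‖d‖^2)/2 := by positivity
  have hyoung : lam * mu ≤ lam^p/p + mu^q/q :=
    Real.young_inequality_of_nonneg hl hm (Real.holderConjugate_iff.mpr ⟨hp, by rw [← one_div, ← one_div]; exact hpq⟩)
  have habs : (c*d).re ≤ ‖c‖ * ‖d‖ := by
    calc (c*d).re ≤ ‖c*d‖ := Complex.re_le_norm _
      _ = ‖c‖ * ‖d‖ := norm_mul c d
  have hamgm : ‖c‖ * ‖d‖ ≤ (‖c‖^2 + ‖d‖^2)/2 := by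
    nlinarith [sq_nonneg (‖c‖ - ‖d‖)]
  calc lam * (mu * (c*d).re) = lam * mu * (c*d).re := by ring
    _ ≤ lam * mu * (‖c‖ * ‖d‖) := mul_le_mul_of_nonneg_left habs hlm
    _ ≤ lam * mu * ((‖c‖^2 + ‖d‖^2)/2) := mul_le_mul_of_nonneg_left hamgm hlm
    _ ≤ (lam^p/p + mu^q/q) * ((‖c‖^2 + ‖d‖^2)/2) :=
        mul_le_mul_of_nonneg_right hyoung hs0

/-- Key scalar lemma: equality case analysis for one `(i,j)` term. -/
lemma key_scalar {p q : ℝ} (hp : 1 < p) (hq : 1 < q) (hpq : 1/p + 1/q = 1)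
    {lam mu : ℝ} (hl : 0 ≤ lam) (hm : 0 ≤ mu) {c d : ℂ}
    (h : lam * (mu * (c*d).re) =
      (lam ^ p / p + mu ^ q / q) * ((‖c‖ ^ 2 + ‖d‖ ^ 2) / 2)) :
    (mu : ℂ) * c = ((lam ^ (p-1) : ℝ) : ℂ) * (starRingEnd ℂ) d := by
  have hp0 : (0:ℝ) < p := lt_trans one_pos hp
  have hq0 : (0:ℝ) < q := lt_trans one_pos hq
  set s : ℝ := (‖c‖ ^ 2 + ‖d‖ ^ 2) / 2 with hs
  have hs0 : 0 ≤ s := by positivity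
  have hcd0 : s = 0 → c = 0 ∧ d = 0 := by
    intro h0
    have hc : ‖c‖ = 0 ∧ ‖d‖ = 0 := by
      constructor <;> nlinarith [norm_nonneg c, norm_nonneg d]
    exact ⟨norm_eq_zero.1 hc.1, norm_eq_zero.1 hc.2⟩
  rcases eq_or_lt_of_le hl with hl0 | hl0
  · -- lam = 0
    rw [← hl0] at h ⊢
    rw [Real.zero_rpow (sub_ne_zero_of_ne (by linarith : p ≠ 1))]
    rw [Real.zero_rpow (ne_of_gt hp0)] at h
    simp only [zero_mul, zero_div, zero_add] at h
    rcases eq_or_lt_of_le hm with hm0 | hm0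
    · rw [← hm0]; simp
    · have hq' : 0 < mu ^ q := Real.rpow_pos_of_pos hm0 q
      rcases eq_or_lt_of_le hs0 with hsz | hsz
      · rcases hcd0 hsz.symm with ⟨hc, hd⟩
        simp [hc, hd]
      · exact absurd h.symm (ne_of_gt (mul_pos (div_pos hq' hq0) hsz))
  · rcases eq_or_lt_of_le hm with hm0 | hm0
    · -- mu = 0, lam > 0
      rw [← hm0] at h ⊢
      rw [Real.zero_rpow (ne_of_gt hq0)] at h
      simp only [mul_zero, zero_mul, zero_div, add_zero] at h
      have hp' : 0 < lam ^ p := Real.rpow_pos_of_pos hl0 p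
      rcases eq_or_lt_of_le hs0 with hsz | hsz
      · rcases hcd0 hsz.symm with ⟨hc, hd⟩
        simp [hc, hd]
      · exact absurd h.symm (ne_of_gt (mul_pos (div_pos hp' hp0) hsz))
    · -- lam, mu > 0
      rcases eq_or_lt_of_le hs0 with hsz | hsz
      · rcases hcd0 hsz.symm with ⟨hc, hd⟩
        simp [hc, hd]
      · -- s > 0 : full equality chain
        have hlm : 0 < lam * mu := mul_pos hl0 hm0
        have hyoung : lam * mu ≤ lam ^ p / p + mu ^ q / q :=
          Real.young_inequality_of_nonneg hl hm (Real.holderConjugate_iff.mpr ⟨hp, by rw [← one_div, ← one_div]; exact hpq⟩)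
        have habs : (c*d).re ≤ ‖c‖ * ‖d‖ := by
          calc (c*d).re ≤ ‖c*d‖ := Complex.re_le_norm _
            _ = ‖c‖ * ‖d‖ := norm_mul c d
        have hamgm : ‖c‖ * ‖d‖ ≤ s := by
          nlinarith [sq_nonneg (‖c‖ - ‖d‖)]
        have u1 : lam * (mu * (c*d).re) ≤ lam * mu * (‖c‖ * ‖d‖) := by
          calc lam * (mu * (c*d).re) = lam * mu * (c*d).re := by ring
            _ ≤ lam * mu * (‖c‖ * ‖d‖) :=
              mul_le_mul_of_nonneg_left habs hlm.le
        have u2 : lam * mu * (‖c‖ * ‖d‖) ≤ lam * mu * s :=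
          mul_le_mul_of_nonneg_left hamgm hlm.le
        have u3 : lam * mu * s ≤ (lam ^ p / p + mu ^ q / q) * s :=
          mul_le_mul_of_nonneg_right hyoung hs0
        -- equalities
        have eB : lam * mu * s = (lam ^ p / p + mu ^ q / q) * s := by linarith
        have eA : lam * mu * (‖c‖ * ‖d‖) = lam * mu * s := by linarith
        have eC : lam * (mu * (c*d).re) = lam * mu * (‖c‖ * ‖d‖) := by
          linarith
        have hym : lam * mu = lam ^ p / p + mu ^ q / q :=
          mul_right_cancel₀ (ne_of_gt hsz) eB
        have hXY : lam ^ p = mu ^ q := young_eq_case hp hq hpq hl0 hm0 hym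
        have hmu : mu = lam ^ (p - 1) := by
          have hq1 : q * (1/q) = 1 := by field_simp
          have hp1 : p * (1/q) = p - 1 := by
            have hpq2 : q + p = p * q := by
              have h1 : (1/p) * (p*q) + (1/q) * (p*q) = 1 * (p*q) := by
                rw [← add_mul, hpq]
              have h2 : (1/p) * (p*q) = q := by field_simp
              have h3 : (1/q) * (p*q) = p := by field_simp
              rw [h2, h3] at h1
              linarith
            rw [mul_one_div, div_eq_iff (ne_of_gt hq0)]
            nlinarith
          calc mu = mu ^ (q * (1/q)) := by rw [hq1, Real.rpow_one]
            _ = (mu ^ q) ^ (1/q : ℝ) := Real.rpow_mul hm _ _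
            _ = (lam ^ p) ^ (1/q : ℝ) := by rw [hXY]
            _ = lam ^ (p * (1/q)) := (Real.rpow_mul hl _ _).symm
            _ = lam ^ (p - 1) := by rw [hp1]
        have hcdabs : ‖c‖ = ‖d‖ := by
          have h1 := mul_left_cancel₀ (ne_of_gt hlm) eA
          rw [hs] at h1
          exact amgm_eq_case h1
        have hre : (c*d).re = ‖c*d‖ := by
          have h1 : lam * mu * (c*d).re = lam * mu * (‖c‖ * ‖d‖) := by
            calc lam * mu * (c*d).re = lam * (mu * (c*d).re) := by ring
              _ = lam * mu * (‖c‖ * ‖d‖) := eC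
          have h2 := mul_left_cancel₀ (ne_of_gt hlm) h1
          rw [h2, norm_mul]
        -- c*d is a nonnegative real
        have him : (c*d).im = 0 := im_zero_of_re_eq_abs hre
        have hcd : c * d = ((‖c‖ * ‖d‖ : ℝ) : ℂ) := by
          apply Complex.ext
          · rw [hre, norm_mul]; simp
          · simp [him]
        by_cases hc0 : c = 0
        · have hd0 : d = 0 := by
            have : ‖d‖ = 0 := by rw [← hcdabs, hc0, norm_zero]
            exact norm_eq_zero.1 this
          simp [hc0, hd0]
        · have hdc : d = (starRingEnd ℂ) c := by
            have h1 : c * d = c * (starRingEnd ℂ) c := by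
              rw [Complex.mul_conj, hcd, ← hcdabs]
              norm_cast
              rw [← Complex.sq_norm]
              ring
            exact mul_left_cancel₀ hc0 h1
          rw [hdc, Complex.conj_conj, ← hmu]

-- matrix helpers
section MatHelpers
variable {n : ℕ}


/-- Diagonal entry of `Xᴴ * X` is the squared column norm. -/
lemma diag_cthm (X : Matrix (Fin n) (Fin n) ℂ) (i : Fin n) :
    ((Xᴴ * X) i i).re = ∑ k, ‖X k i‖ ^ 2 := by
  rw [Matrix.mul_apply, Complex.re_sum]
  refine Finset.sum_congr rfl fun k _ => ?_
  rw [Matrix.conjTranspose_apply, Complex.star_def, mul_comm, Complex.mul_conj,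
    Complex.ofReal_re, ← Complex.sq_norm]

/-- If `M` is a Hermitian idempotent and `Vᴴ V = 1`, diagonal entries of `Vᴴ M V`
are at most 1. -/
lemma proj_diag_le_one {M V : Matrix (Fin n) (Fin n) ℂ} (hM : Mᴴ = M) (hMM : M * M = M)
    (hV : Vᴴ * V = 1) (i : Fin n) : ((Vᴴ * M * V) i i).re ≤ 1 := by
  set N : Matrix (Fin n) (Fin n) ℂ := 1 - M with hNdef
  have hN : Nᴴ = N := by rw [hNdef, conjTranspose_sub, conjTranspose_one, hM]
  have hNN : N * N = N := by
    rw [hNdef, sub_mul, one_mul, mul_sub, mul_one, hMM, sub_self, sub_zero]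
  have key : Vᴴ * N * V = (N * V)ᴴ * (N * V) := by
    rw [conjTranspose_mul, hN]
    simp only [mul_assoc]
    rw [← mul_assoc N N V, hNN]
  have h1 : Vᴴ * N * V = 1 - Vᴴ * M * V := by
    rw [hNdef, mul_sub, sub_mul, mul_one, hV]
  have h2 : 0 ≤ ((Vᴴ * N * V) i i).re := by
    rw [key, diag_cthm]
    positivity
  rw [h1, Matrix.sub_apply, Complex.sub_re, Matrix.one_apply_eq] at h2
  simpa using h2


end MatHelpers

set_option maxHeartbeats 4000000 in
/-- Smoothness of the Schatten `p`-norm: the norming functional of a unit vector `x`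
is unique, and equals `|x|^{p-1} u^*` where `x = u|x|` is the polar decomposition. -/
theorem stmt5 (p q : ℝ) (hp : 1 < p) (hq : 1 < q) (hpq : 1 / p + 1 / q = 1)
    (x u y : Matrix (Fin n) (Fin n) ℂ)
    (hpolar : x = u * matAbs x)
    (hpartial : u * uᴴ * u = u)
    (hker : ∀ v : Fin n → ℂ, u.mulVec v = 0 ↔ (matAbs x).mulVec v = 0)
    (hx : schattenNorm p x = 1)
    (hy : schattenNorm q y ≤ 1)
    (htr : (x * y).trace = 1) :
    y = matAbsRpow x (p - 1) * uᴴ := by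
  have hp0 : (0:ℝ) < p := lt_trans one_pos hp
  have hq0 : (0:ℝ) < q := lt_trans one_pos hq
  -- spectral data for |x|
  have hA : (matAbs x).PosSemidef := matAbs_posSemidef x
  have hB : (matAbs y).PosSemidef := matAbs_posSemidef y
  set V : Matrix (Fin n) (Fin n) ℂ :=
    ((matAbs_isHermitian x).eigenvectorUnitary :
      Matrix (Fin n) (Fin n) ℂ) with hVdef
  set W : Matrix (Fin n) (Fin n) ℂ :=
    ((matAbs_isHermitian y).eigenvectorUnitary :
      Matrix (Fin n) (Fin n) ℂ) with hWdef
  set lam : Fin n → ℝ :=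
    (matAbs_isHermitian x).eigenvalues with hlamdef
  set mu : Fin n → ℝ :=
    (matAbs_isHermitian y).eigenvalues with hmudef
  have hlam : ∀ i, 0 ≤ lam i := fun i => hA.eigenvalues_nonneg i
  have hmu : ∀ j, 0 ≤ mu j := fun j => hB.eigenvalues_nonneg j
  have hV1 : Vᴴ * V = 1 := by
    rw [hVdef]
    exact Matrix.mem_unitaryGroup_iff'.mp
      ((matAbs_isHermitian x).eigenvectorUnitary).2
  have hV2 : V * Vᴴ = 1 := by
    rw [hVdef]
    exact Matrix.mem_unitaryGroup_iff.mp
      ((matAbs_isHermitian x).eigenvectorUnitary).2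
  have hW1 : Wᴴ * W = 1 := by
    rw [hWdef]
    exact Matrix.mem_unitaryGroup_iff'.mp
      ((matAbs_isHermitian y).eigenvectorUnitary).2
  have hW2 : W * Wᴴ = 1 := by
    rw [hWdef]
    exact Matrix.mem_unitaryGroup_iff.mp
      ((matAbs_isHermitian y).eigenvectorUnitary).2
  have hrpow : ∀ r : ℝ, matAbsRpow x r =
      V * Matrix.diagonal (fun i => ((lam i ^ r : ℝ) : ℂ)) * Vᴴ := fun r => by
      rw [matAbsRpow, IsHermitian.cfc, Unitary.conjStarAlgAut_apply]; rfl
  have hrpowy : ∀ r : ℝ, matAbsRpow y r =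
      W * Matrix.diagonal (fun j => ((mu j ^ r : ℝ) : ℂ)) * Wᴴ := fun r => by
      rw [matAbsRpow, IsHermitian.cfc, Unitary.conjStarAlgAut_apply]; rfl
  have hspecA : matAbs x = V * Matrix.diagonal (fun i => ((lam i : ℝ) : ℂ)) * Vᴴ :=
    by have := (matAbs_isHermitian x).spectral_theorem
       rw [Unitary.conjStarAlgAut_apply] at this
       exact this
  have hspecB : matAbs y = W * Matrix.diagonal (fun j => ((mu j : ℝ) : ℂ)) * Wᴴ :=
    by have := (matAbs_isHermitian y).spectral_theorem
       rw [Unitary.conjStarAlgAut_apply] at this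
       exact this
  -- trace formulas for Schatten norms
  have htrace_rpow_x : (matAbsRpow x p).trace = ∑ i, ((lam i ^ p : ℝ) : ℂ) := by
    rw [hrpow p, Matrix.trace_mul_comm, ← mul_assoc, hV1, one_mul, Matrix.trace_diagonal]
  have htrace_rpow_y : (matAbsRpow y q).trace = ∑ j, ((mu j ^ q : ℝ) : ℂ) := by
    rw [hrpowy q, Matrix.trace_mul_comm, ← mul_assoc, hW1, one_mul, Matrix.trace_diagonal]
  have hsum1 : ∑ i, lam i ^ p = 1 := by
    have h1 : schattenNorm p x = (∑ i, lam i ^ p) ^ (1/p : ℝ) := by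
      rw [schattenNorm, htrace_rpow_x, Complex.re_sum]
      simp
    rw [h1] at hx
    have h0 : 0 ≤ ∑ i, lam i ^ p :=
      Finset.sum_nonneg fun i _ => Real.rpow_nonneg (hlam i) p
    calc ∑ i, lam i ^ p = ((∑ i, lam i ^ p) ^ (1/p : ℝ)) ^ p := by
          rw [← Real.rpow_mul h0, show (1/p)*p = (1:ℝ) by field_simp, Real.rpow_one]
      _ = 1 := by rw [hx, Real.one_rpow]
  have hsum2 : ∑ j, mu j ^ q ≤ 1 := by
    have h1 : schattenNorm q y = (∑ j, mu j ^ q) ^ (1/q : ℝ) := by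
      rw [schattenNorm, htrace_rpow_y, Complex.re_sum]
      simp
    rw [h1] at hy
    have h0 : 0 ≤ ∑ j, mu j ^ q :=
      Finset.sum_nonneg fun j _ => Real.rpow_nonneg (hmu j) q
    calc ∑ j, mu j ^ q = ((∑ j, mu j ^ q) ^ (1/q : ℝ)) ^ q := by
          rw [← Real.rpow_mul h0, show (1/q)*q = (1:ℝ) by field_simp, Real.rpow_one]
      _ ≤ 1 ^ q := Real.rpow_le_rpow (Real.rpow_nonneg h0 _) hy (le_of_lt hq0)
      _ = 1 := Real.one_rpow q
  -- the matrices T and E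
  set T : Matrix (Fin n) (Fin n) ℂ := Vᴴ * y * W with hTdef
  set E : Matrix (Fin n) (Fin n) ℂ := Wᴴ * u * V with hEdef
  have trace_conjV : ∀ M : Matrix (Fin n) (Fin n) ℂ, (V * M * Vᴴ).trace = M.trace := by
    intro M
    rw [Matrix.trace_mul_comm, ← mul_assoc, hV1, one_mul]
  have trace_diag_mul : ∀ (d : Fin n → ℂ) (N : Matrix (Fin n) (Fin n) ℂ),
      (Matrix.diagonal d * N).trace = ∑ i, d i * N i i := by
    intro d N
    simp [Matrix.trace, Matrix.diag, Matrix.diagonal_mul]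
  -- trace identity
  have htr4 : ∑ i, ∑ j, lam i * (T i j * E j i).re = 1 := by
    have htr2 : (matAbs x * (y * u)).trace = 1 := by
      rw [hpolar] at htr
      calc (matAbs x * (y * u)).trace = (y * u * matAbs x).trace := Matrix.trace_mul_comm _ _
        _ = (u * matAbs x * y).trace := by
            rw [mul_assoc, Matrix.trace_mul_comm]
        _ = 1 := htr
    have hTE : T * E = Vᴴ * (y * u) * V := by
      rw [hTdef, hEdef]
      simp only [mul_assoc]
      rw [← mul_assoc W Wᴴ, hW2, one_mul]
    have e1 : matAbs x * (y * u) =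
        V * (Matrix.diagonal (fun i => ((lam i : ℝ) : ℂ)) * (T * E)) * Vᴴ := by
      rw [hTE, hspecA]
      simp only [mul_assoc]
      rw [hV2, mul_one]
    have htr3 : ∑ i, ((lam i : ℝ) : ℂ) * (T * E) i i = 1 := by
      rw [e1, trace_conjV, trace_diag_mul] at htr2
      exact htr2
    have := congrArg Complex.re htr3
    rw [Complex.re_sum] at this
    rw [show (1:ℂ).re = (1:ℝ) from rfl] at this
    rw [← this]
    refine Finset.sum_congr rfl fun i _ => ?_
    rw [Complex.re_ofReal_mul, Matrix.mul_apply, Complex.re_sum, Finset.mul_sum]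
  -- column norms of T
  have hBW : matAbs y * W = W * Matrix.diagonal (fun j => ((mu j : ℝ) : ℂ)) := by
    rw [hspecB]
    simp only [mul_assoc]
    rw [hW1, mul_one]
  have hyy : yᴴ * y = matAbs y * matAbs y :=
    (matAbs_mul_self y).symm
  have hyyW : yᴴ * y * W = W * (Matrix.diagonal (fun j => ((mu j : ℝ) : ℂ)) *
      Matrix.diagonal (fun j => ((mu j : ℝ) : ℂ))) := by
    rw [hyy, mul_assoc, hBW, ← mul_assoc, hBW, mul_assoc]
  have hTT : Tᴴ * T = Matrix.diagonal (fun j => ((mu j : ℝ) : ℂ) * ((mu j : ℝ) : ℂ)) := by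
    have hTH : Tᴴ = Wᴴ * yᴴ * V := by
      rw [hTdef, Matrix.conjTranspose_mul, Matrix.conjTranspose_mul,
        Matrix.conjTranspose_conjTranspose]
      simp only [mul_assoc]
    rw [hTH, hTdef]
    calc Wᴴ * yᴴ * V * (Vᴴ * y * W) = Wᴴ * (yᴴ * y * W) := by
          simp only [mul_assoc]
          rw [← mul_assoc V Vᴴ, hV2, one_mul]
      _ = Wᴴ * W * (Matrix.diagonal (fun j => ((mu j : ℝ) : ℂ)) *
            Matrix.diagonal (fun j => ((mu j : ℝ) : ℂ))) := by
          rw [hyyW, mul_assoc]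
      _ = Matrix.diagonal (fun j => ((mu j : ℝ) : ℂ) * ((mu j : ℝ) : ℂ)) := by
          rw [hW1, one_mul, Matrix.diagonal_mul_diagonal]
  have hTcol : ∀ j, ∑ i, ‖T i j‖ ^ 2 = mu j ^ 2 := by
    intro j
    have h1 := diag_cthm T j
    rw [hTT, Matrix.diagonal_apply_eq] at h1
    rw [← h1, ← Complex.ofReal_mul, Complex.ofReal_re]
    ring
  -- the normalized matrix G and the projection P
  set mu' : Fin n → ℝ := fun j => if mu j = 0 then 0 else (mu j)⁻¹ with hmu'def
  set G : Matrix (Fin n) (Fin n) ℂ := T * Matrix.diagonal (fun j => ((mu' j : ℝ) : ℂ)) with hGdef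
  have hGapp : ∀ i j, G i j = T i j * ((mu' j : ℝ) : ℂ) := fun i j => Matrix.mul_diagonal _ _ _ _
  have hTmuG : ∀ i j, T i j = ((mu j : ℝ) : ℂ) * G i j := by
    intro i j
    by_cases h0 : mu j = 0
    · have h1 := hTcol j
      rw [h0] at h1
      norm_num at h1
      have h3 := (Finset.sum_eq_zero_iff_of_nonneg (fun i _ => by positivity)).1 h1 i
        (Finset.mem_univ i)
      have hz : T i j = 0 :=
        norm_eq_zero.1 (pow_eq_zero_iff (by norm_num : (2:ℕ) ≠ 0) |>.1 h3)
      rw [hz, h0]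
      simp
    · rw [hGapp i j]
      have hne : ((mu j : ℝ) : ℂ) ≠ 0 := by exact_mod_cast h0
      simp only [hmu'def, if_neg h0]
      rw [Complex.ofReal_inv, mul_comm ((mu j : ℝ) : ℂ), mul_assoc,
        inv_mul_cancel₀ hne, mul_one]
  set ind : Fin n → ℂ := fun j => if mu j = 0 then 0 else 1 with hinddef
  set P : Matrix (Fin n) (Fin n) ℂ := Matrix.diagonal ind with hPdef
  have hPP : P * P = P := by
    rw [hPdef, Matrix.diagonal_mul_diagonal]
    refine congrArg Matrix.diagonal (funext fun j => ?_)
    by_cases h0 : mu j = 0 <;> simp [hinddef, h0]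
  have hPH : Pᴴ = P := by
    rw [hPdef, Matrix.diagonal_conjTranspose]
    refine congrArg Matrix.diagonal (funext fun j => ?_)
    by_cases h0 : mu j = 0 <;> simp [hinddef, h0]
  have hD'H : (Matrix.diagonal (fun j => ((mu' j : ℝ) : ℂ)))ᴴ =
      Matrix.diagonal (fun j => ((mu' j : ℝ) : ℂ)) := by
    rw [Matrix.diagonal_conjTranspose]
    refine congrArg Matrix.diagonal (funext fun j => ?_)
    simp [Pi.star_apply, Complex.star_def, Complex.conj_ofReal]
  set K : Matrix (Fin n) (Fin n) ℂ := y * W * Matrix.diagonal (fun j => ((mu' j : ℝ) : ℂ))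
    with hKdef
  have hKHK : Kᴴ * K = P := by
    rw [hKdef]
    have e : (y * W * Matrix.diagonal (fun j => ((mu' j : ℝ) : ℂ)))ᴴ *
        (y * W * Matrix.diagonal (fun j => ((mu' j : ℝ) : ℂ))) =
        Matrix.diagonal (fun j => ((mu' j : ℝ) : ℂ)) * (Wᴴ * (yᴴ * y * W) *
          Matrix.diagonal (fun j => ((mu' j : ℝ) : ℂ))) := by
      rw [Matrix.conjTranspose_mul, Matrix.conjTranspose_mul, hD'H]
      simp only [mul_assoc]
    rw [e, hyyW, ← mul_assoc Wᴴ W, hW1, one_mul, Matrix.diagonal_mul_diagonal,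
      Matrix.diagonal_mul_diagonal, Matrix.diagonal_mul_diagonal, hPdef]
    refine congrArg Matrix.diagonal (funext fun j => ?_)
    by_cases h0 : mu j = 0
    · simp [hinddef, hmu'def, h0]
    · have hne : ((mu j : ℝ) : ℂ) ≠ 0 := by exact_mod_cast h0
      simp only [hinddef, hmu'def, if_neg h0]
      rw [Complex.ofReal_inv]
      field_simp
  have hKP : K * P = K := by
    have h0 : (K * P - K)ᴴ * (K * P - K) = 0 := by
      rw [Matrix.conjTranspose_sub, Matrix.conjTranspose_mul, hPH, sub_mul, mul_sub, mul_sub]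
      have e1 : P * Kᴴ * (K * P) = P := by
        rw [mul_assoc P Kᴴ, ← mul_assoc Kᴴ K, hKHK, ← mul_assoc, hPP, hPP]
      have e2 : P * Kᴴ * K = P := by
        rw [mul_assoc, hKHK, hPP]
      have e3 : Kᴴ * (K * P) = P := by
        rw [← mul_assoc, hKHK, hPP]
      rw [e1, e2, e3, hKHK]
      simp
    exact sub_eq_zero.mp (Matrix.conjTranspose_mul_self_eq_zero.mp h0)
  have hMH : (K * Kᴴ)ᴴ = K * Kᴴ := by
    rw [Matrix.conjTranspose_mul, Matrix.conjTranspose_conjTranspose]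
  have hMM : (K * Kᴴ) * (K * Kᴴ) = K * Kᴴ := by
    rw [mul_assoc K Kᴴ, ← mul_assoc Kᴴ K, hKHK, ← mul_assoc, hKP]
  have hGVK : G = Vᴴ * K := by
    rw [hGdef, hTdef, hKdef]
    simp only [mul_assoc]
  -- the four norm bounds
  have hF5 : ∀ i, ∑ j, ‖G i j‖ ^ 2 ≤ 1 := by
    intro i
    have h1 := diag_cthm Gᴴ i
    rw [Matrix.conjTranspose_conjTranspose] at h1
    have h2 : ∀ k, ‖Gᴴ k i‖ = ‖G i k‖ := fun k => by
      rw [Matrix.conjTranspose_apply, Complex.star_def, Complex.norm_conj]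
    have hGG : G * Gᴴ = Vᴴ * (K * Kᴴ) * V := by
      rw [hGVK, Matrix.conjTranspose_mul, Matrix.conjTranspose_conjTranspose]
      simp only [mul_assoc]
    calc ∑ j, ‖G i j‖ ^ 2 = ((G * Gᴴ) i i).re := by
          rw [h1]
          exact Finset.sum_congr rfl fun k _ => by rw [h2 k]
      _ ≤ 1 := by
          rw [hGG]
          exact proj_diag_le_one hMH hMM hV1 i
  have hF6 : ∀ j, ∑ i, ‖G i j‖ ^ 2 ≤ 1 := by
    intro j
    have hGHG : Gᴴ * G = P := by
      rw [hGVK, Matrix.conjTranspose_mul, Matrix.conjTranspose_conjTranspose]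
      simp only [mul_assoc]
      rw [← mul_assoc V Vᴴ, hV2, one_mul, hKHK]
    have h1 := diag_cthm G j
    rw [hGHG, hPdef, Matrix.diagonal_apply_eq] at h1
    rw [← h1]
    by_cases h0 : mu j = 0 <;> simp [hinddef, h0]
  have huuH : (uᴴ * u)ᴴ = uᴴ * u := by
    rw [Matrix.conjTranspose_mul, Matrix.conjTranspose_conjTranspose]
  have huu : (uᴴ * u) * (uᴴ * u) = uᴴ * u := by
    calc (uᴴ * u) * (uᴴ * u) = uᴴ * (u * uᴴ * u) := by simp only [mul_assoc]
      _ = uᴴ * u := by rw [hpartial]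
  have huuH2 : (u * uᴴ)ᴴ = u * uᴴ := by
    rw [Matrix.conjTranspose_mul, Matrix.conjTranspose_conjTranspose]
  have huu2 : (u * uᴴ) * (u * uᴴ) = u * uᴴ := by
    calc (u * uᴴ) * (u * uᴴ) = (u * uᴴ * u) * uᴴ := by simp only [mul_assoc]
      _ = u * uᴴ := by rw [hpartial]
  have hF7 : ∀ i, ∑ j, ‖E j i‖ ^ 2 ≤ 1 := by
    intro i
    have hEHE : Eᴴ * E = Vᴴ * (uᴴ * u) * V := by
      rw [hEdef, Matrix.conjTranspose_mul, Matrix.conjTranspose_mul,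
        Matrix.conjTranspose_conjTranspose]
      simp only [mul_assoc]
      rw [← mul_assoc W Wᴴ, hW2, one_mul]
    have h1 := diag_cthm E i
    rw [hEHE] at h1
    rw [← h1]
    exact proj_diag_le_one huuH huu hV1 i
  have hF8 : ∀ j, ∑ i, ‖E j i‖ ^ 2 ≤ 1 := by
    intro j
    have hEEH : E * Eᴴ = Wᴴ * (u * uᴴ) * W := by
      rw [hEdef, Matrix.conjTranspose_mul, Matrix.conjTranspose_mul,
        Matrix.conjTranspose_conjTranspose]
      simp only [mul_assoc]
      rw [← mul_assoc V Vᴴ, hV2, one_mul]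
    have h1 := diag_cthm Eᴴ j
    rw [Matrix.conjTranspose_conjTranspose, hEEH] at h1
    have h2 : ∀ k, ‖Eᴴ k j‖ = ‖E j k‖ := fun k => by
      rw [Matrix.conjTranspose_apply, Complex.star_def, Complex.norm_conj]
    calc ∑ i, ‖E j i‖ ^ 2 = ((Wᴴ * (u * uᴴ) * W) j j).re := by
          rw [h1]
          exact Finset.sum_congr rfl fun k _ => by rw [h2 k]
      _ ≤ 1 := proj_diag_le_one huuH2 huu2 hW1 j
  -- equality extraction
  have hfg : ∀ i j, lam i * (T i j * E j i).re ≤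
      (lam i ^ p / p + mu j ^ q / q) *
        ((‖G i j‖ ^ 2 + ‖E j i‖ ^ 2) / 2) := by
    intro i j
    have h1 : (T i j * E j i).re = mu j * ((G i j) * (E j i)).re := by
      rw [hTmuG i j, mul_assoc, Complex.re_ofReal_mul]
    rw [h1]
    exact key_ineq hp hq hpq (hlam i) (hmu j) (G i j) (E j i)
  have hgle : ∑ i, ∑ j, (lam i ^ p / p + mu j ^ q / q) *
      ((‖G i j‖ ^ 2 + ‖E j i‖ ^ 2) / 2) ≤ 1 := by
    have hs_row : ∀ i, ∑ j, (‖G i j‖ ^ 2 + ‖E j i‖ ^ 2) / 2 ≤ 1 := by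
      intro i
      rw [show ∑ j, (‖G i j‖ ^ 2 + ‖E j i‖ ^ 2) / 2 =
        ((∑ j, ‖G i j‖ ^ 2) + ∑ j, ‖E j i‖ ^ 2) / 2 by
          rw [← Finset.sum_add_distrib, ← Finset.sum_div]]
      linarith [hF5 i, hF7 i]
    have hs_col : ∀ j, ∑ i, (‖G i j‖ ^ 2 + ‖E j i‖ ^ 2) / 2 ≤ 1 := by
      intro j
      rw [show ∑ i, (‖G i j‖ ^ 2 + ‖E j i‖ ^ 2) / 2 =
        ((∑ i, ‖G i j‖ ^ 2) + ∑ i, ‖E j i‖ ^ 2) / 2 by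
          rw [← Finset.sum_add_distrib, ← Finset.sum_div]]
      linarith [hF6 j, hF8 j]
    have h1 : ∑ i, ∑ j, lam i ^ p / p *
        ((‖G i j‖ ^ 2 + ‖E j i‖ ^ 2) / 2) ≤ 1/p := by
      calc ∑ i, ∑ j, lam i ^ p / p *
            ((‖G i j‖ ^ 2 + ‖E j i‖ ^ 2) / 2)
          = ∑ i, lam i ^ p / p * ∑ j,
            ((‖G i j‖ ^ 2 + ‖E j i‖ ^ 2) / 2) :=
            Finset.sum_congr rfl fun i _ => (Finset.mul_sum _ _ _).symm
        _ ≤ ∑ i, lam i ^ p / p * 1 := by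
            refine Finset.sum_le_sum fun i _ => ?_
            have hnn : 0 ≤ lam i ^ p / p := by
              have := Real.rpow_nonneg (hlam i) p
              positivity
            exact mul_le_mul_of_nonneg_left (hs_row i) hnn
        _ = (∑ i, lam i ^ p) / p := by
            simp [mul_one, ← Finset.sum_div]
        _ = 1/p := by rw [hsum1]
    have h2 : ∑ i, ∑ j, mu j ^ q / q *
        ((‖G i j‖ ^ 2 + ‖E j i‖ ^ 2) / 2) ≤ 1/q := by
      rw [Finset.sum_comm]
      calc ∑ j, ∑ i, mu j ^ q / q *
            ((‖G i j‖ ^ 2 + ‖E j i‖ ^ 2) / 2)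
          = ∑ j, mu j ^ q / q * ∑ i,
            ((‖G i j‖ ^ 2 + ‖E j i‖ ^ 2) / 2) :=
            Finset.sum_congr rfl fun j _ => (Finset.mul_sum _ _ _).symm
        _ ≤ ∑ j, mu j ^ q / q * 1 := by
            refine Finset.sum_le_sum fun j _ => ?_
            have hnn : 0 ≤ mu j ^ q / q := by
              have := Real.rpow_nonneg (hmu j) q
              positivity
            exact mul_le_mul_of_nonneg_left (hs_col j) hnn
        _ = (∑ j, mu j ^ q) / q := by
            simp [mul_one, ← Finset.sum_div]
        _ ≤ 1/q := by gcongr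
    calc ∑ i, ∑ j, (lam i ^ p / p + mu j ^ q / q) *
          ((‖G i j‖ ^ 2 + ‖E j i‖ ^ 2) / 2)
        = (∑ i, ∑ j, lam i ^ p / p *
            ((‖G i j‖ ^ 2 + ‖E j i‖ ^ 2) / 2)) +
          ∑ i, ∑ j, mu j ^ q / q *
            ((‖G i j‖ ^ 2 + ‖E j i‖ ^ 2) / 2) := by
          rw [← Finset.sum_add_distrib]
          refine Finset.sum_congr rfl fun i _ => ?_
          rw [← Finset.sum_add_distrib]
          refine Finset.sum_congr rfl fun j _ => ?_
          ring
      _ ≤ 1/p + 1/q := add_le_add h1 h2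
      _ = 1 := hpq
  have hsum_eq : ∑ i, ∑ j, lam i * (T i j * E j i).re =
      ∑ i, ∑ j, (lam i ^ p / p + mu j ^ q / q) *
        ((‖G i j‖ ^ 2 + ‖E j i‖ ^ 2) / 2) :=
    le_antisymm
      (Finset.sum_le_sum fun i _ => Finset.sum_le_sum fun j _ => hfg i j)
      (by rw [htr4]; exact hgle)
  have hentry : ∀ i j, T i j = ((lam i ^ (p-1) : ℝ) : ℂ) * (starRingEnd ℂ) (E j i) := by
    intro i j
    have houter := (Finset.sum_eq_sum_iff_of_le
      (fun i _ => Finset.sum_le_sum fun j _ => hfg i j)).1 hsum_eq i (Finset.mem_univ i)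
    have hinner := (Finset.sum_eq_sum_iff_of_le (fun j _ => hfg i j)).1 houter j
      (Finset.mem_univ j)
    have h1 : lam i * (mu j * ((G i j) * (E j i)).re) =
        (lam i ^ p / p + mu j ^ q / q) *
          ((‖G i j‖ ^ 2 + ‖E j i‖ ^ 2) / 2) := by
      rw [← hinner, hTmuG i j, mul_assoc, Complex.re_ofReal_mul]
    have h2 := key_scalar hp hq hpq (hlam i) (hmu j) h1
    rw [hTmuG i j, h2]
  -- assembly
  have hTeq : T = Matrix.diagonal (fun i => ((lam i ^ (p-1) : ℝ) : ℂ)) * Eᴴ := by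
    ext i j
    rw [Matrix.diagonal_mul, Matrix.conjTranspose_apply, hentry i j]
    rfl
  have hEH : Eᴴ = Vᴴ * (uᴴ * W) := by
    rw [hEdef, Matrix.conjTranspose_mul, Matrix.conjTranspose_mul,
      Matrix.conjTranspose_conjTranspose]
  have hy2 : y = V * T * Wᴴ := by
    rw [hTdef]
    simp only [mul_assoc]
    rw [hW2, mul_one, ← mul_assoc, hV2, one_mul]
  have hfin : y = V * Matrix.diagonal (fun i => ((lam i ^ (p-1) : ℝ) : ℂ)) * Vᴴ * uᴴ := by
    rw [hy2, hTeq, hEH]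
    simp only [mul_assoc]
    rw [hW2, mul_one]
  rw [hfin, hrpow (p-1)]
end

section
/- Let $(m_{ij})_{i,j \in I}$ be a family of complex numbers indexed by an arbitrary set $I$ such that $(m_{ij})_{i,j \in F}$ is positive semi-definite with unit diagonal for every finite $F \subseteq I$, and suppose for each finite $F$ there are a finite-dimensional $C^*$-algebra $A_F$ with tracial state $\tau_F$ and unitaries $(d_{i,F})_{i \in F}$ realizing $m_{ij} = \tau_F(d_{i,F}^* d_{j,F})$ on $F$. Then, via an ultraproduct over the net of finite subsets of $I$ with respect to a nontrivial ultrafilter $\mathcal{F}$, there exist a $C^*$-algebra $B/\mathcal{I}_{\mathcal{F}}$ with a tracial state $\tau_{\mathcal{F}}$ and unitaries $(d_i)_{i \in I}$ such that $m_{ij} = \tau_{\mathcal{F}}(d_i^* d_j)$ for all $i, j \in I$. -/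
open ComplexOrder

/-- A unital C*-algebra bundled with a tracial state. -/
structure TracialCStarAlg where
  carrier : Type
  [instNormedRing : NormedRing carrier]
  [instStarRing : StarRing carrier]
  [instCStarRing : CStarRing carrier]
  [instNormedAlgebra : NormedAlgebra ℂ carrier]
  [instCompleteSpace : CompleteSpace carrier]
  [instStarModule : StarModule ℂ carrier]
  τ : carrier →ₗ[ℂ] ℂ
  τ_one : τ 1 = 1
  τ_pos : ∀ a, 0 ≤ τ (star a * a)
  τ_tracial : ∀ a b, τ (a * b) = τ (b * a)

attribute [instance] TracialCStarAlg.instNormedRing TracialCStarAlg.instStarRing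
  TracialCStarAlg.instCStarRing TracialCStarAlg.instNormedAlgebra
  TracialCStarAlg.instCompleteSpace TracialCStarAlg.instStarModule

open scoped ENNReal

section AuxStateBound

variable {X : Type*} [NormedRing X] [StarRing X] [CStarRing X] [NormedAlgebra ℂ X]
  [CompleteSpace X] [StarModule ℂ X]

@[reducible]
def aux_cstar : CStarAlgebra X :=
  { ‹NormedRing X›, ‹StarRing X›, ‹CStarRing X›, ‹NormedAlgebra ℂ X›, ‹CompleteSpace X›,
    ‹StarModule ℂ X› with }

lemma aux_state_bound (φ : X →ₗ[ℂ] ℂ) (hone : φ 1 = 1)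
    (hpos : ∀ a : X, 0 ≤ φ (star a * a)) (a : X) : ‖φ a‖ ≤ 2 * ‖a‖ := by
  letI : CStarAlgebra X := aux_cstar
  letI := CStarAlgebra.spectralOrder X
  haveI : StarOrderedRing X := CStarAlgebra.spectralOrderedRing X
  -- positivity on nonnegative elements
  have hmono : ∀ x : X, 0 ≤ x → 0 ≤ φ x := by
    intro x hx
    rw [StarOrderedRing.nonneg_iff] at hx
    induction hx using AddSubmonoid.closure_induction with
    | mem y hy => obtain ⟨s, rfl⟩ := hy; exact hpos s
    | zero => simp
    | add y z _ _ hy hz => rw [map_add]; exact add_nonneg hy hz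
  have key : ∀ r : ℝ, φ (algebraMap ℝ X r) = (r : ℂ) := by
    intro r
    rw [IsScalarTower.algebraMap_apply ℝ ℂ X, Algebra.algebraMap_eq_smul_one, map_smul, hone,
      smul_eq_mul, mul_one]
    rfl
  have hsa : ∀ h : X, IsSelfAdjoint h → ‖φ h‖ ≤ ‖h‖ := by
    intro h hh
    have h1 : 0 ≤ φ (algebraMap ℝ X ‖h‖ - h) :=
      hmono _ (sub_nonneg.mpr hh.le_algebraMap_norm_self)
    have h2 : 0 ≤ φ (h - (-(algebraMap ℝ X ‖h‖))) :=
      hmono _ (sub_nonneg.mpr hh.neg_algebraMap_norm_le_self)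
    rw [map_sub, key] at h1
    rw [map_sub, map_neg, key] at h2
    rw [Complex.nonneg_iff] at h1 h2
    simp only [Complex.sub_re, Complex.sub_im, Complex.ofReal_re, Complex.ofReal_im,
      Complex.neg_re, Complex.neg_im, sub_nonneg, neg_neg, neg_zero] at h1 h2
    have him : (φ h).im = 0 := by
      have := h1.2; have := h2.2; linarith [h1.2, h2.2]
    have : φ h = ((φ h).re : ℂ) := Complex.ext rfl (by simp [him])
    rw [this, Complex.norm_real, Real.norm_eq_abs, abs_le]
    constructor
    · linarith [h2.1]
    · exact h1.1
  obtain ⟨h, k, hh, hk, hdecomp, hnh, hnk⟩ :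
      ∃ h k : X, IsSelfAdjoint h ∧ IsSelfAdjoint k ∧ a = h + Complex.I • k ∧
        ‖h‖ ≤ ‖a‖ ∧ ‖k‖ ≤ ‖a‖ := by
    refine ⟨(2:ℂ)⁻¹ • (a + star a), (-(2:ℂ)⁻¹ * Complex.I) • (a - star a), ?_, ?_, ?_, ?_, ?_⟩
    · rw [IsSelfAdjoint, star_smul, star_add, star_star]
      rw [show star ((2:ℂ)⁻¹) = (2:ℂ)⁻¹ by simp]
      module
    · rw [IsSelfAdjoint, star_smul, star_sub, star_star]
      rw [show star (-(2:ℂ)⁻¹ * Complex.I) = (2:ℂ)⁻¹ * Complex.I by simp]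
      module
    · have hIk : Complex.I • ((-(2:ℂ)⁻¹ * Complex.I) • (a - star a))
          = (2:ℂ)⁻¹ • (a - star a) := by
        rw [smul_smul]
        congr 1
        have := Complex.I_sq
        ring_nf
        rw [Complex.I_sq]
        ring
      rw [hIk]
      module
    · rw [norm_smul]
      calc ‖(2:ℂ)⁻¹‖ * ‖a + star a‖ ≤ ‖(2:ℂ)⁻¹‖ * (‖a‖ + ‖star a‖) := by
            gcongr; exact norm_add_le _ _
        _ = ‖a‖ := by rw [norm_star]; simp; ring
    · rw [norm_smul]
      calc ‖-(2:ℂ)⁻¹ * Complex.I‖ * ‖a - star a‖ ≤ ‖-(2:ℂ)⁻¹ * Complex.I‖ * (‖a‖ + ‖star a‖) := by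
            gcongr; exact norm_sub_le _ _
        _ = ‖a‖ := by rw [norm_star]; simp; ring
  calc ‖φ a‖ = ‖φ h + Complex.I * φ k‖ := by
        rw [hdecomp, map_add, map_smul, smul_eq_mul]
    _ ≤ ‖φ h‖ + ‖Complex.I * φ k‖ := norm_add_le _ _
    _ = ‖φ h‖ + ‖φ k‖ := by rw [norm_mul, Complex.norm_I, one_mul]
    _ ≤ ‖h‖ + ‖k‖ := add_le_add (hsa h hh) (hsa k hk)
    _ ≤ ‖a‖ + ‖a‖ := add_le_add hnh hnk
    _ = 2 * ‖a‖ := by ring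

end AuxStateBound

/-- If `(m i j)` is positive semi-definite with unit diagonal on each finite subset and
is realized on each finite `F ⊆ I` by unitaries in a finite-dimensional C*-algebra
with tracial state, then (via an ultraproduct over the finite subsets of `I`) there are
a C*-algebra with a tracial state `τ'` and unitaries `(d_i)_{i ∈ I}` with
`m i j = τ'(d_i^* d_j)` for all `i, j ∈ I`. -/
theorem stmt15 (I : Type) (m : I → I → ℂ)
    (hpsd : ∀ F : Finset I, ∀ c : I → ℂ,
      0 ≤ ∑ i ∈ F, ∑ j ∈ F, (starRingEnd ℂ) (c i) * c j * m i j)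
    (hdiag : ∀ i, m i i = 1)
    (A : Finset I → Type) [∀ F, NormedRing (A F)] [∀ F, StarRing (A F)]
    [∀ F, CStarRing (A F)] [∀ F, NormedAlgebra ℂ (A F)] [∀ F, CompleteSpace (A F)]
    [∀ F, StarModule ℂ (A F)] [∀ F, FiniteDimensional ℂ (A F)]
    (τ : ∀ F, A F →ₗ[ℂ] ℂ)
    (hτ1 : ∀ F, τ F 1 = 1)
    (hτpos : ∀ F, ∀ a : A F, 0 ≤ τ F (star a * a))
    (hτtr : ∀ F, ∀ a b : A F, τ F (a * b) = τ F (b * a))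
    (d : ∀ F : Finset I, I → A F)
    (hd_unitary : ∀ F : Finset I, ∀ i ∈ F, d F i ∈ unitary (A F))
    (hd : ∀ F : Finset I, ∀ i ∈ F, ∀ j ∈ F, m i j = τ F (star (d F i) * d F j)) :
    ∃ (T : TracialCStarAlg) (e : I → T.carrier),
      (∀ i, e i ∈ unitary T.carrier) ∧
      ∀ i j, m i j = T.τ (star (e i) * e j) := by
  classical
  haveI hnt : ∀ F, Nontrivial (A F) := fun F =>
    nontrivial_of_ne 1 0 fun h => one_ne_zero (α := ℂ) (by rw [← hτ1 F, h, map_zero])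
  -- componentwise unitaries
  have hcomp : ∀ (i : I) (F : Finset I), (if i ∈ F then d F i else 1) ∈ unitary (A F) := by
    intro i F
    by_cases h : i ∈ F
    · simpa [h] using hd_unitary F i h
    · simpa [h] using (unitary (A F)).one_mem
  have hmem : ∀ i : I, Memℓp (fun F => if i ∈ F then d F i else 1) ∞ := by
    intro i
    rw [memℓp_infty_iff]
    refine ⟨1, ?_⟩
    rintro x ⟨F, rfl⟩
    exact le_of_eq (CStarRing.norm_of_mem_unitary (hcomp i F))
  let e : I → lp A ∞ := fun i => ⟨fun F => if i ∈ F then d F i else 1, hmem i⟩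
  have hcoe_mul : ∀ (x y : lp A ∞) (F : Finset I), (x * y) F = x F * y F := fun x y F =>
    congrFun (lp.infty_coeFn_mul x y) F
  have hcoe_star : ∀ (x : lp A ∞) (F : Finset I), (star x) F = star (x F) := fun x F =>
    congrFun (lp.coeFn_star x) F
  have hcoe_one : ∀ F : Finset I, (1 : lp A ∞) F = 1 := fun F =>
    congrFun (lp.infty_coeFn_one (B := A)) F
  have he_unit : ∀ i, e i ∈ unitary (lp A ∞) := by
    intro i
    rw [Unitary.mem_iff]
    constructor
    · apply lp.ext
      funext F
      rw [show ⇑(star (e i) * e i) F = star (e i F) * e i F by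
        rw [hcoe_mul, hcoe_star], hcoe_one]
      exact (Unitary.mem_iff.mp (hcomp i F)).1
    · apply lp.ext
      funext F
      rw [show ⇑(e i * star (e i)) F = e i F * star (e i F) by
        rw [hcoe_mul, hcoe_star], hcoe_one]
      exact (Unitary.mem_iff.mp (hcomp i F)).2
  -- the ultrafilter
  haveI : (Filter.atTop : Filter (Finset I)).NeBot := Filter.atTop_neBot
  set 𝓤 : Ultrafilter (Finset I) := Ultrafilter.of Filter.atTop with h𝓤
  have hU : (𝓤 : Filter (Finset I)) ≤ Filter.atTop := Ultrafilter.of_le _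
  have hexists : ∀ x : lp A ∞, ∃ L, Filter.Tendsto (fun F => τ F (x F)) 𝓤 (nhds L) := by
    intro x
    have hball : ↑(Ultrafilter.map (fun F => τ F (x F)) 𝓤) ≤
        Filter.principal (Metric.closedBall (0 : ℂ) (2 * ‖x‖)) := by
      rw [Ultrafilter.coe_map, Filter.le_principal_iff, Filter.mem_map]
      refine Filter.univ_mem' fun F => ?_
      simp only [Set.mem_preimage, Metric.mem_closedBall, dist_zero_right]
      calc ‖τ F (x F)‖ ≤ 2 * ‖x F‖ := aux_state_bound (τ F) (hτ1 F) (hτpos F) (x F)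
        _ ≤ 2 * ‖x‖ := by
            have := lp.norm_apply_le_norm (E := A) ENNReal.top_ne_zero x F
            linarith
    obtain ⟨L, -, hL⟩ := (isCompact_closedBall (0 : ℂ) (2 * ‖x‖)).ultrafilter_le_nhds
      (Ultrafilter.map (fun F => τ F (x F)) 𝓤) hball
    exact ⟨L, hL⟩
  choose Λ hΛ using hexists
  have hadd : ∀ x y : lp A ∞, Λ (x + y) = Λ x + Λ y := by
    intro x y
    refine tendsto_nhds_unique (hΛ (x + y)) (((hΛ x).add (hΛ y)).congr fun F => ?_)
    rw [show (x + y) F = x F + y F from congrFun (lp.coeFn_add x y) F, map_add]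
  have hsmul : ∀ (c : ℂ) (x : lp A ∞), Λ (c • x) = c * Λ x := by
    intro c x
    refine tendsto_nhds_unique (hΛ (c • x)) (((hΛ x).const_mul c).congr fun F => ?_)
    rw [show (c • x) F = c • x F from congrFun (lp.coeFn_smul c x) F, map_smul, smul_eq_mul]
  let τ' : lp A ∞ →ₗ[ℂ] ℂ :=
    { toFun := Λ, map_add' := hadd, map_smul' := hsmul }
  have hτ'_one : τ' 1 = 1 := by
    refine tendsto_nhds_unique (hΛ 1) (tendsto_const_nhds.congr fun F => ?_)
    rw [hcoe_one, hτ1]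
  have hτ'_pos : ∀ a : lp A ∞, 0 ≤ τ' (star a * a) := by
    intro a
    have hcl : IsClosed {z : ℂ | 0 ≤ z} := by
      have : {z : ℂ | 0 ≤ z} = Complex.re ⁻¹' Set.Ici 0 ∩ Complex.im ⁻¹' {0} := by
        ext z
        simp [Complex.nonneg_iff, eq_comm]
      rw [this]
      exact (isClosed_Ici.preimage Complex.continuous_re).inter
        (isClosed_singleton.preimage Complex.continuous_im)
    refine hcl.mem_of_tendsto (hΛ (star a * a)) (Filter.Eventually.of_forall fun F => ?_)
    show 0 ≤ τ F ((star a * a) F)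
    rw [hcoe_mul, hcoe_star]
    exact hτpos F (a F)
  have hτ'_tr : ∀ a b : lp A ∞, τ' (a * b) = τ' (b * a) := by
    intro a b
    refine tendsto_nhds_unique (hΛ (a * b)) ((hΛ (b * a)).congr fun F => ?_)
    rw [hcoe_mul, hcoe_mul, hτtr]
  refine ⟨⟨lp A ∞, τ', hτ'_one, hτ'_pos, hτ'_tr⟩, e, he_unit, fun i j => ?_⟩
  have hev : ∀ᶠ F in (𝓤 : Filter (Finset I)),
      τ F ((star (e i) * e j) F) = m i j := by
    refine ((Filter.eventually_ge_atTop ({i, j} : Finset I)).filter_mono hU).mono fun F hF => ?_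
    have hi : i ∈ F := hF (Finset.mem_insert_self i {j})
    have hj : j ∈ F := hF (Finset.mem_insert_of_mem (Finset.mem_singleton_self j))
    rw [hcoe_mul, hcoe_star]
    show τ F (star (e i F) * e j F) = m i j
    have h1 : e i F = d F i := if_pos hi
    have h2 : e j F = d F j := if_pos hj
    rw [h1, h2, ← hd F i hi j hj]
  exact tendsto_nhds_unique (Filter.Tendsto.congr' (Filter.EventuallyEq.symm hev)
    tendsto_const_nhds) (hΛ (star (e i) * e j))
end
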